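/- Let f, g_1,…,g_m ∈ ℝ[X] have integer coefficients and degrees at most d, set g_0 := 1 and S := {x ∈ ℝⁿ : g_1(x) ≥ 0,…,g_m(x) ≥ 0}, and assume S is nonempty, compact, contained in [−1,1]ⁿ, has nonempty interior, and Q(S) is archimedean. Assume f(x) > 0 for all x ∈ S, and let f* := min_{x∈S} f(x) > 0. For D ∈ ℕ set f_D* := sup{b ∈ ℝ : f − b ∈ Q_D(S)}. Then there exists D_0 ∈ ℕ such that for every even integer D ≥ D_0 one has 0 < f_D* ≤ f*. -/

import Mathlib

open MvPolynomial

noncomputable section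

/-- `f` is a sum of squares of polynomials. -/
def IsSOS {n : ℕ} (f : MvPolynomial (Fin n) ℝ) : Prop :=
  ∃ (r : ℕ) (s : Fin r → MvPolynomial (Fin n) ℝ), f = ∑ i, (s i) ^ 2

/-- Membership in the quadratic module generated by `g_1,…,g_m` (with `g_0 := 1`). -/
def InQM {n m : ℕ} (g : Fin m → MvPolynomial (Fin n) ℝ) (f : MvPolynomial (Fin n) ℝ) : Prop :=
  ∃ σ0 : MvPolynomial (Fin n) ℝ, ∃ σ : Fin m → MvPolynomial (Fin n) ℝ,
    IsSOS σ0 ∧ (∀ j, IsSOS (σ j)) ∧ f = σ0 + ∑ j, σ j * g j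

/-- Membership in the `D`-truncated quadratic module generated by `g_1,…,g_m`
(with `g_0 := 1`): a representation `f = Σ_j σ_j g_j` with `deg (σ_j g_j) ≤ D`. -/
def InQMT {n m : ℕ} (D : ℕ) (g : Fin m → MvPolynomial (Fin n) ℝ)
    (f : MvPolynomial (Fin n) ℝ) : Prop :=
  ∃ σ0 : MvPolynomial (Fin n) ℝ, ∃ σ : Fin m → MvPolynomial (Fin n) ℝ,
    IsSOS σ0 ∧ σ0.totalDegree ≤ D ∧
    (∀ j, IsSOS (σ j) ∧ (σ j * g j).totalDegree ≤ D) ∧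
    f = σ0 + ∑ j, σ j * g j

namespace Stmt18

variable {n m : ℕ}


lemma isSOS_iff {f : MvPolynomial (Fin n) ℝ} : IsSOS f ↔ IsSumSq f := by
  constructor
  · rintro ⟨r, s, rfl⟩
    have : ∀ i : Fin r, (s i)^2 = s i * s i := fun i => sq (s i)
    simp only [this]
    exact IsSumSq.sum_mul_self _ _
  · intro h
    induction h with
    | zero => exact ⟨0, ![], by simp⟩
    | @sq_add a S _ ih =>
      obtain ⟨r, s, rfl⟩ := ih
      refine ⟨r+1, Fin.cons a s, ?_⟩
      rw [Fin.sum_univ_succ]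
      simp [sq]

lemma sumSq_mul_sq {f : MvPolynomial (Fin n) ℝ} (hf : IsSumSq f) (p : MvPolynomial (Fin n) ℝ) : IsSumSq (p^2 * f) := by
  induction hf with
  | zero => simpa using IsSumSq.zero
  | @sq_add a S _ ih =>
    have : p^2 * (a * a + S) = (p*a) * (p*a) + p^2 * S := by ring
    rw [this]
    exact IsSumSq.sq_add _ ih

lemma sumSq_mul {f h : MvPolynomial (Fin n) ℝ} (hf : IsSumSq f) (hh : IsSumSq h) : IsSumSq (f * h) := by
  induction hf with
  | zero => simpa using IsSumSq.zero
  | @sq_add a S _ ih =>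
    have : (a * a + S) * h = a^2 * h + S * h := by ring
    rw [this]
    exact IsSumSq.add (sumSq_mul_sq hh a) ih

lemma isSumSq_sq (p : MvPolynomial (Fin n) ℝ) : IsSumSq (p^2) := by
  have : p^2 = p * p + 0 := by ring
  rw [this]; exact IsSumSq.sq_add p IsSumSq.zero

lemma isSumSq_const {c : ℝ} (hc : 0 ≤ c) : IsSumSq (C c : MvPolynomial (Fin n) ℝ) := by
  have : (C c : MvPolynomial (Fin n) ℝ) = (C (Real.sqrt c))^2 := by
    rw [← C_pow, Real.sq_sqrt hc]
  rw [this]; exact isSumSq_sq _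

lemma eval_sumSq_nonneg {p : MvPolynomial (Fin n) ℝ} (hp : IsSumSq p) (x : Fin n → ℝ) : 0 ≤ eval x p := by
  induction hp with
  | zero => simp
  | @sq_add a S _ ih =>
    simp only [map_add, map_mul]
    nlinarith [mul_self_nonneg (eval x a)]

variable {g : Fin m → MvPolynomial (Fin n) ℝ}

lemma inQM_of_sumSq {p : MvPolynomial (Fin n) ℝ} (hp : IsSumSq p) : InQM g p :=
  ⟨p, 0, isSOS_iff.2 hp, fun _ => isSOS_iff.2 IsSumSq.zero, by simp⟩

lemma inQM_zero : InQM g 0 := inQM_of_sumSq IsSumSq.zero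

lemma inQM_one : InQM g 1 := inQM_of_sumSq (by simpa using isSumSq_sq (1 : MvPolynomial (Fin n) ℝ))

lemma inQM_const {c : ℝ} (hc : 0 ≤ c) : InQM g (C c) := inQM_of_sumSq (isSumSq_const hc)

lemma inQM_add {p q : MvPolynomial (Fin n) ℝ} (hp : InQM g p) (hq : InQM g q) : InQM g (p + q) := by
  obtain ⟨a0, a, ha0, ha, rfl⟩ := hp
  obtain ⟨b0, b, hb0, hb, rfl⟩ := hq
  refine ⟨a0 + b0, a + b, isSOS_iff.2 ((isSOS_iff.1 ha0).add (isSOS_iff.1 hb0)),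
    fun j => isSOS_iff.2 ((isSOS_iff.1 (ha j)).add (isSOS_iff.1 (hb j))), ?_⟩
  simp only [Pi.add_apply, add_mul, Finset.sum_add_distrib]
  ring

lemma inQM_sumSq_mul {s p : MvPolynomial (Fin n) ℝ} (hs : IsSumSq s) (hp : InQM g p) : InQM g (s * p) := by
  obtain ⟨a0, a, ha0, ha, rfl⟩ := hp
  refine ⟨s * a0, fun j => s * a j, isSOS_iff.2 (sumSq_mul hs (isSOS_iff.1 ha0)),
    fun j => isSOS_iff.2 (sumSq_mul hs (isSOS_iff.1 (ha j))), ?_⟩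
  rw [mul_add, Finset.mul_sum]
  congr 1
  exact Finset.sum_congr rfl fun j _ => (mul_assoc s (a j) (g j)).symm

lemma inQM_smul {c : ℝ} (hc : 0 ≤ c) {p : MvPolynomial (Fin n) ℝ} (hp : InQM g p) : InQM g (C c * p) :=
  inQM_sumSq_mul (isSumSq_const hc) hp

lemma inQM_g (j : Fin m) : InQM g (g j) := by
  refine ⟨0, fun k => if k = j then 1 else 0, isSOS_iff.2 IsSumSq.zero, fun k => ?_, ?_⟩
  · by_cases h : k = j
    · simp only [if_pos h]
      exact isSOS_iff.2 (by simpa using isSumSq_sq (1 : MvPolynomial (Fin n) ℝ))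
    · simp only [if_neg h]
      exact isSOS_iff.2 IsSumSq.zero
  · simp [ite_mul]

lemma inQM_eval_nonneg {p : MvPolynomial (Fin n) ℝ} (hp : InQM g p) {x : Fin n → ℝ}
    (hx : ∀ j, 0 ≤ eval x (g j)) : 0 ≤ eval x p := by
  obtain ⟨a0, a, ha0, ha, rfl⟩ := hp
  simp only [map_add, map_sum, map_mul]
  have h0 := eval_sumSq_nonneg (isSOS_iff.1 ha0) x
  have hj : ∀ j ∈ Finset.univ, (0:ℝ) ≤ eval x (a j) * eval x (g j) :=
    fun j _ => mul_nonneg (eval_sumSq_nonneg (isSOS_iff.1 (ha j)) x) (hx j)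
  exact add_nonneg h0 (Finset.sum_nonneg hj)

lemma inQM_congr {p q : MvPolynomial (Fin n) ℝ} (h : p = q) (hp : InQM g p) : InQM g q := h ▸ hp

section Bounded

variable (g)

/-- Polynomials whose square is bounded above w.r.t. the quadratic module. -/
def sqBdd : Subalgebra ℝ (MvPolynomial (Fin n) ℝ) where
  carrier := {p | ∃ c : ℝ, 0 ≤ c ∧ InQM g (C c - p^2)}
  algebraMap_mem' := fun r => ⟨r^2, sq_nonneg r, by
    have : (C (r^2) : MvPolynomial (Fin n) ℝ) - (algebraMap ℝ _ r)^2 = 0 := by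
      rw [MvPolynomial.algebraMap_eq, ← C_pow, sub_self]
    rw [this]; exact inQM_zero⟩
  add_mem' := by
    rintro p q ⟨c1, hc1, h1⟩ ⟨c2, hc2, h2⟩
    refine ⟨2*(c1+c2), by linarith, ?_⟩
    have key : (C (2*(c1+c2)) : MvPolynomial (Fin n) ℝ) - (p+q)^2
        = C 2 * (C c1 - p^2) + C 2 * (C c2 - q^2) + (p - q)^2 := by
      have h0 : (C (2*(c1+c2)) : MvPolynomial (Fin n) ℝ) = C 2 * (C c1 + C c2) := by
        rw [← map_add, ← map_mul]
      have h3 : (C (2:ℝ) : MvPolynomial (Fin n) ℝ) = 2 := map_ofNat _ 2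
      rw [h0, h3]; ring
    exact inQM_congr key.symm (inQM_add (inQM_add
      (inQM_smul (by norm_num) h1) (inQM_smul (by norm_num) h2))
      (inQM_of_sumSq (isSumSq_sq _)))
  mul_mem' := by
    rintro p q ⟨c1, hc1, h1⟩ ⟨c2, hc2, h2⟩
    refine ⟨c1*c2, mul_nonneg hc1 hc2, ?_⟩
    have key : (C (c1*c2) : MvPolynomial (Fin n) ℝ) - (p*q)^2
        = q^2 * (C c1 - p^2) + C c1 * (C c2 - q^2) := by
      have : (C (c1*c2) : MvPolynomial (Fin n) ℝ) = C c1 * C c2 := by rw [← map_mul]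
      rw [this]; ring
    exact inQM_congr key.symm (inQM_add (inQM_sumSq_mul (isSumSq_sq q) h1)
      (inQM_smul hc1 h2))

variable {g}

lemma sqBdd_eq_top {N : ℕ} (hN : InQM g ((N : MvPolynomial (Fin n) ℝ) - ∑ i, (X i)^2)) :
    sqBdd g = ⊤ := by
  rw [eq_top_iff, ← MvPolynomial.adjoin_range_X]
  rw [Algebra.adjoin_le_iff]
  rintro _ ⟨i, rfl⟩
  refine ⟨(N : ℝ), Nat.cast_nonneg N, ?_⟩
  have key : (C (N:ℝ) : MvPolynomial (Fin n) ℝ) - (X i)^2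
      = ((N : MvPolynomial (Fin n) ℝ) - ∑ j, (X j)^2) + ∑ j ∈ Finset.univ.erase i, (X j)^2 := by
    have h2 : ∑ j ∈ Finset.univ.erase i, ((X j : MvPolynomial (Fin n) ℝ))^2 + (X i)^2
        = ∑ j, (X j)^2 := Finset.sum_erase_add _ _ (Finset.mem_univ i)
    have h3 : ((N : MvPolynomial (Fin n) ℝ)) = C (N : ℝ) := by
      simp [MvPolynomial.C_eq_coe_nat]
    rw [h3, ← h2]; ring
  exact inQM_congr key.symm (inQM_add hN (inQM_of_sumSq (by
    have : ∀ j : Fin n, (X j : MvPolynomial (Fin n) ℝ)^2 = X j * X j := fun j => sq _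
    simp only [this]
    exact IsSumSq.sum_mul_self _ _)))

lemma exists_sq_bound {N : ℕ} (hN : InQM g ((N : MvPolynomial (Fin n) ℝ) - ∑ i, (X i)^2))
    (p : MvPolynomial (Fin n) ℝ) : ∃ c : ℝ, 0 ≤ c ∧ InQM g (C c - p^2) := by
  have : p ∈ sqBdd g := by rw [sqBdd_eq_top hN]; trivial
  exact this

lemma exists_ub {N : ℕ} (hN : InQM g ((N : MvPolynomial (Fin n) ℝ) - ∑ i, (X i)^2))
    (p : MvPolynomial (Fin n) ℝ) : ∃ c : ℝ, InQM g (C c - p) := by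
  obtain ⟨c, hc, h⟩ := exists_sq_bound hN p
  refine ⟨(c+1)/2, ?_⟩
  have key : (C ((c+1)/2) : MvPolynomial (Fin n) ℝ) - p
      = C (2⁻¹ : ℝ) * (C c - p^2) + C (2⁻¹ : ℝ) * (1 - p)^2 := by
    have h1 : (C ((c+1)/2) : MvPolynomial (Fin n) ℝ) = C (2⁻¹:ℝ) * C c + C (2⁻¹:ℝ) := by
      rw [← map_mul, ← map_add]; congr 1; ring
    have h3 : (C (2⁻¹:ℝ) : MvPolynomial (Fin n) ℝ) * 2 = 1 := by
      rw [show (2 : MvPolynomial (Fin n) ℝ) = C (2:ℝ) from (map_ofNat _ 2).symm, ← map_mul]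
      norm_num
    rw [h1]; linear_combination p * h3
  exact inQM_congr key.symm (inQM_add (inQM_smul (by norm_num) h)
    (inQM_smul (by norm_num) (inQM_of_sumSq (isSumSq_sq _))))

lemma exists_lb {N : ℕ} (hN : InQM g ((N : MvPolynomial (Fin n) ℝ) - ∑ i, (X i)^2))
    (p : MvPolynomial (Fin n) ℝ) : ∃ c : ℝ, InQM g (C c + p) := by
  obtain ⟨c, h⟩ := exists_ub hN (-p)
  exact ⟨c, inQM_congr (by ring) h⟩

end Bounded

section LemmaD

lemma lemmaD {N : ℕ} (hN : InQM g ((N : MvPolynomial (Fin n) ℝ) - ∑ i, (X i)^2))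
    {h s q : MvPolynomial (Fin n) ℝ} (hs : IsSumSq s) (hq : InQM g q)
    (hrel : s * h = 1 + q) : InQM g h := by
  classical
  -- initial bound : h + δ₀ ∈ M with δ₀ ≥ 0
  obtain ⟨d0', hd0'⟩ := exists_lb hN h
  set δ₀ : ℝ := max d0' 0 with hδ₀def
  have hδ₀ : 0 ≤ δ₀ := le_max_right _ _
  have hbase : InQM g (h + C δ₀) := by
    have : h + C δ₀ = (C d0' + h) + C (δ₀ - d0') := by
      rw [show (C (δ₀ - d0') : MvPolynomial (Fin n) ℝ) = C δ₀ - C d0' from map_sub _ _ _]; ring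
    exact inQM_congr this.symm (inQM_add hd0' (inQM_const (by simp [hδ₀def])))
  -- the junk term and its bound
  set w : MvPolynomial (Fin n) ℝ := s + s * q + C δ₀ * s^2 with hwdef
  have hw : InQM g w :=
    inQM_add (inQM_add (inQM_of_sumSq hs) (inQM_sumSq_mul hs hq))
      (inQM_smul hδ₀ (inQM_of_sumSq (isSumSq_sq s)))
  obtain ⟨c0, hc0⟩ := exists_ub hN w
  set c : ℝ := max c0 1 with hcdef
  have hc1 : 1 ≤ c := le_max_right _ _
  have hcpos : 0 < c := lt_of_lt_of_le one_pos hc1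
  have hwc : InQM g (C c - w) := by
    have : C c - w = (C c0 - w) + C (c - c0) := by
      rw [show (C (c - c0) : MvPolynomial (Fin n) ℝ) = C c - C c0 from map_sub _ _ _]; ring
    exact inQM_congr this.symm (inQM_add hc0 (inQM_const (by simp [hcdef])))
  set ε : ℝ := c⁻¹ with hεdef
  have hε : 0 < ε := inv_pos.2 hcpos
  -- one improvement step
  have step : ∀ δ : ℝ, 0 ≤ δ → δ ≤ δ₀ → InQM g (h + C δ) → InQM g (h + C (δ - ε)) := by
    intro δ hδ hδδ₀ hmem
    have e1 : (C (2*ε) : MvPolynomial (Fin n) ℝ) = 2 * C ε := by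
      simp only [map_mul, map_ofNat]
    have e2 : (C (2*ε*δ) : MvPolynomial (Fin n) ℝ) = 2 * C ε * C δ := by
      simp only [map_mul, map_ofNat]
    have e3 : (C (ε^2) : MvPolynomial (Fin n) ℝ) = (C ε)^2 := by
      simp only [map_pow]
    have e4 : (C (ε^2*(δ₀-δ)) : MvPolynomial (Fin n) ℝ) = (C ε)^2 * (C δ₀ - C δ) := by
      simp only [map_mul, map_pow, map_sub]
    have e5 : (C (δ - 2*ε + ε^2*c) : MvPolynomial (Fin n) ℝ)
        = C δ - 2 * C ε + (C ε)^2 * C c := by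
      simp only [map_add, map_sub, map_mul, map_pow, map_ofNat]
    have key : (1 - C ε * s)^2 * (h + C δ) + C (2*ε) * q + C (2*ε*δ) * s
        + C (ε^2) * (C c - w) + C (ε^2*(δ₀-δ)) * s^2
        = h + C (δ - 2*ε + ε^2*c) := by
      rw [e1, e2, e3, e4, e5, hwdef]
      linear_combination ((C ε)^2 * s - 2 * C ε) * hrel
    have hmems : InQM g ((1 - C ε * s)^2 * (h + C δ) + C (2*ε) * q + C (2*ε*δ) * s
        + C (ε^2) * (C c - w) + C (ε^2*(δ₀-δ)) * s^2) :=
      inQM_add (inQM_add (inQM_add (inQM_add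
        (inQM_sumSq_mul (isSumSq_sq _) hmem)
        (inQM_smul (by positivity) hq))
        (inQM_smul (mul_nonneg (by positivity) hδ) (inQM_of_sumSq hs)))
        (inQM_smul (by positivity) hwc))
        (inQM_smul (mul_nonneg (sq_nonneg ε) (by linarith)) (inQM_of_sumSq (isSumSq_sq s)))
    have himp : InQM g (h + C (δ - 2*ε + ε^2*c)) := inQM_congr key hmems
    have : δ - 2*ε + ε^2*c = δ - ε := by
      have hec : ε * c = 1 := by rw [hεdef]; exact inv_mul_cancel₀ hcpos.ne'
      linear_combination ε * hec
    rwa [this] at himp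
  -- iterate
  have iter : ∀ j : ℕ, InQM g (h + C (δ₀ - j * ε)) ∨ InQM g h := by
    intro j
    induction j with
    | zero => left; simpa using hbase
    | succ j ih =>
      rcases ih with hmem | hdone
      · by_cases hd : 0 ≤ δ₀ - j * ε
        · left
          have := step _ hd (by nlinarith [hε.le]) hmem
          have harith : δ₀ - j * ε - ε = δ₀ - (j+1 : ℕ) * ε := by push_cast; ring
          rwa [harith] at this
        · right
          have : h = (h + C (δ₀ - j * ε)) + C (-(δ₀ - j * ε)) := by
            rw [map_neg]; ring
          exact inQM_congr this.symm (inQM_add hmem (inQM_const (by linarith)))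
      · right; exact hdone
  obtain ⟨j, hj⟩ := exists_nat_gt (δ₀ * c)
  rcases iter j with hmem | hdone
  · have hneg : δ₀ - j * ε < 0 := by
      have h1 : δ₀ * c * c⁻¹ < j * c⁻¹ := mul_lt_mul_of_pos_right hj (inv_pos.2 hcpos)
      have h2 : δ₀ * c * c⁻¹ = δ₀ := by field_simp
      have h3 : ε = c⁻¹ := hεdef
      linarith
    have : h = (h + C (δ₀ - j * ε)) + C (-(δ₀ - j * ε)) := by rw [map_neg]; ring
    exact inQM_congr this.symm (inQM_add hmem (inQM_const (by linarith)))
  · exact hdone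

end LemmaD

section Semi

/-- Abstract quadratic module predicate on subsets of the polynomial ring. -/
def QuadMod (Q : Set (MvPolynomial (Fin n) ℝ)) : Prop :=
  (1 : MvPolynomial (Fin n) ℝ) ∈ Q ∧ (∀ a ∈ Q, ∀ b ∈ Q, a + b ∈ Q) ∧
    (∀ p : MvPolynomial (Fin n) ℝ, ∀ a ∈ Q, p^2 * a ∈ Q)

variable {Q : Set (MvPolynomial (Fin n) ℝ)}

lemma QuadMod.zero_mem (hQ : QuadMod Q) : (0 : MvPolynomial (Fin n) ℝ) ∈ Q := by
  have := hQ.2.2 0 1 hQ.1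
  simpa using this

lemma QuadMod.sumSq_mul_mem (hQ : QuadMod Q) {s a : MvPolynomial (Fin n) ℝ}
    (hs : IsSumSq s) (ha : a ∈ Q) : s * a ∈ Q := by
  induction hs with
  | zero => simpa using hQ.zero_mem
  | @sq_add b S hS ih =>
    have : (b * b + S) * a = b^2 * a + S * a := by ring
    rw [this]
    exact hQ.2.1 _ (hQ.2.2 b a ha) _ ih

lemma QuadMod.sumSq_mem (hQ : QuadMod Q) {s : MvPolynomial (Fin n) ℝ} (hs : IsSumSq s) :
    s ∈ Q := by simpa using hQ.sumSq_mul_mem hs hQ.1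

lemma QuadMod.smul_mem (hQ : QuadMod Q) {c : ℝ} (hc : 0 ≤ c) {a : MvPolynomial (Fin n) ℝ}
    (ha : a ∈ Q) : C c * a ∈ Q :=
  hQ.sumSq_mul_mem (isSumSq_const hc) ha

lemma QuadMod.const_mem (hQ : QuadMod Q) {c : ℝ} (hc : 0 ≤ c) :
    (C c : MvPolynomial (Fin n) ℝ) ∈ Q := hQ.sumSq_mem (isSumSq_const hc)

lemma QuadMod.neg_one_of_neg_const (hQ : QuadMod Q) {c : ℝ} (hc : c < 0)
    (h : (C c : MvPolynomial (Fin n) ℝ) ∈ Q) : (-1 : MvPolynomial (Fin n) ℝ) ∈ Q := by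
  have := hQ.smul_mem (c := -c⁻¹)
    (by rw [neg_nonneg]; exact (inv_nonpos).2 hc.le) h
  have he : C (-c⁻¹) * (C c : MvPolynomial (Fin n) ℝ) = -1 := by
    rw [← map_mul]
    have h2 : -c⁻¹ * c = -1 := by
      rw [neg_mul, inv_mul_cancel₀ (ne_of_lt hc)]
    rw [h2, map_neg, map_one]
  rwa [he] at this

variable {g : Fin m → MvPolynomial (Fin n) ℝ} {h : MvPolynomial (Fin n) ℝ}

/-- The quadratic module generated by `InQM g` and `-h`. -/
def M2 (g : Fin m → MvPolynomial (Fin n) ℝ) (h : MvPolynomial (Fin n) ℝ) :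
    Set (MvPolynomial (Fin n) ℝ) :=
  {u | ∃ p, InQM g p ∧ ∃ s, IsSumSq s ∧ u = p - s * h}

lemma inQM_subset_M2 {p : MvPolynomial (Fin n) ℝ} (hp : InQM g p) : p ∈ M2 g h :=
  ⟨p, hp, 0, IsSumSq.zero, by simp⟩

lemma neg_h_mem_M2 : -h ∈ M2 g h :=
  ⟨0, inQM_zero, 1, by simpa using isSumSq_sq (1 : MvPolynomial (Fin n) ℝ), by simp⟩

lemma quadMod_M2 : QuadMod (M2 g h) := by
  refine ⟨⟨1, inQM_one, 0, IsSumSq.zero, by simp⟩, ?_, ?_⟩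
  · rintro a ⟨p1, hp1, s1, hs1, rfl⟩ b ⟨p2, hp2, s2, hs2, rfl⟩
    exact ⟨p1 + p2, inQM_add hp1 hp2, s1 + s2, hs1.add hs2, by ring⟩
  · rintro p a ⟨p1, hp1, s1, hs1, rfl⟩
    exact ⟨p^2 * p1, inQM_sumSq_mul (isSumSq_sq p) hp1, p^2 * s1,
      sumSq_mul_sq hs1 p, by ring⟩

/-- The family of proper quadratic modules containing `M2 g h`. -/
def QMFam (g : Fin m → MvPolynomial (Fin n) ℝ) (h : MvPolynomial (Fin n) ℝ) :
    Set (Set (MvPolynomial (Fin n) ℝ)) :=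
  {Q | QuadMod Q ∧ M2 g h ⊆ Q ∧ (-1 : MvPolynomial (Fin n) ℝ) ∉ Q}

lemma exists_maximal (hm1 : (-1 : MvPolynomial (Fin n) ℝ) ∉ M2 g h) :
    ∃ P, M2 g h ⊆ P ∧ Maximal (· ∈ QMFam g h) P := by
  apply zorn_subset_nonempty
  · intro c hc hchain hcne
    refine ⟨⋃₀ c, ⟨⟨?_, ?_, ?_⟩, ?_, ?_⟩, fun s hs => Set.subset_sUnion_of_mem hs⟩
    · obtain ⟨Q, hQ⟩ := hcne
      exact ⟨Q, hQ, (hc hQ).1.1⟩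
    · rintro a ⟨Qa, hQa, haa⟩ b ⟨Qb, hQb, hbb⟩
      rcases hchain.total hQa hQb with hab | hba
      · exact ⟨Qb, hQb, (hc hQb).1.2.1 _ (hab haa) _ hbb⟩
      · exact ⟨Qa, hQa, (hc hQa).1.2.1 _ haa _ (hba hbb)⟩
    · rintro p a ⟨Qa, hQa, haa⟩
      exact ⟨Qa, hQa, (hc hQa).1.2.2 p _ haa⟩
    · obtain ⟨Q, hQ⟩ := hcne
      exact fun x hx => ⟨Q, hQ, (hc hQ).2.1 hx⟩
    · rintro ⟨Q, hQ, hm⟩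
      exact (hc hQ).2.2 hm
  · exact ⟨quadMod_M2, subset_rfl, hm1⟩

/-- Quadratic module generated by `P` and `a`. -/
def QMext (P : Set (MvPolynomial (Fin n) ℝ)) (a : MvPolynomial (Fin n) ℝ) :
    Set (MvPolynomial (Fin n) ℝ) :=
  {u | ∃ p ∈ P, ∃ s, IsSumSq s ∧ u = p + s * a}

lemma quadMod_QMext {P : Set (MvPolynomial (Fin n) ℝ)} (hP : QuadMod P)
    (a : MvPolynomial (Fin n) ℝ) : QuadMod (QMext P a) := by
  refine ⟨⟨1, hP.1, 0, IsSumSq.zero, by simp⟩, ?_, ?_⟩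
  · rintro x ⟨p1, hp1, s1, hs1, rfl⟩ y ⟨p2, hp2, s2, hs2, rfl⟩
    exact ⟨p1 + p2, hP.2.1 _ hp1 _ hp2, s1 + s2, hs1.add hs2, by ring⟩
  · rintro p x ⟨p1, hp1, s1, hs1, rfl⟩
    exact ⟨p^2 * p1, hP.2.2 _ _ hp1, p^2 * s1, sumSq_mul_sq hs1 p, by ring⟩

lemma subset_QMext {P : Set (MvPolynomial (Fin n) ℝ)} (hP : QuadMod P)
    (a : MvPolynomial (Fin n) ℝ) : P ⊆ QMext P a :=
  fun x hx => ⟨x, hx, 0, IsSumSq.zero, by simp⟩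

lemma mem_QMext_self {P : Set (MvPolynomial (Fin n) ℝ)} (hP : QuadMod P)
    (a : MvPolynomial (Fin n) ℝ) : a ∈ QMext P a :=
  ⟨0, hP.zero_mem, 1, by simpa using isSumSq_sq (1 : MvPolynomial (Fin n) ℝ), by simp⟩

end Semi

section Total

variable {g : Fin m → MvPolynomial (Fin n) ℝ} {h : MvPolynomial (Fin n) ℝ}
  {P : Set (MvPolynomial (Fin n) ℝ)} {N : ℕ}

lemma P_mem_of_inQM (hPmax : Maximal (· ∈ QMFam g h) P) {p : MvPolynomial (Fin n) ℝ}
    (hp : InQM g p) : p ∈ P := hPmax.1.2.1 (inQM_subset_M2 hp)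

lemma P_ub_mem (hPmax : Maximal (· ∈ QMFam g h) P)
    (hN : InQM g ((N : MvPolynomial (Fin n) ℝ) - ∑ i, (X i)^2))
    (a : MvPolynomial (Fin n) ℝ) : ∃ k : ℝ, 0 ≤ k ∧ C k - a ∈ P ∧ C k + a ∈ P := by
  have hP : QuadMod P := hPmax.1.1
  obtain ⟨k1, hk1⟩ := exists_ub hN a
  obtain ⟨k2, hk2⟩ := exists_lb hN a
  refine ⟨max k1 (max k2 0), le_trans (le_max_right _ _) (le_max_right _ _), ?_, ?_⟩
  · have : (C (max k1 (max k2 0)) : MvPolynomial (Fin n) ℝ) - a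
        = (C k1 - a) + C (max k1 (max k2 0) - k1) := by
      rw [map_sub]; ring
    rw [this]
    exact hP.2.1 _ (P_mem_of_inQM hPmax hk1) _ (hP.const_mem (by simp))
  · have : (C (max k1 (max k2 0)) : MvPolynomial (Fin n) ℝ) + a
        = (C k2 + a) + C (max k1 (max k2 0) - k2) := by
      rw [map_sub]; ring
    rw [this]
    exact hP.2.1 _ (P_mem_of_inQM hPmax hk2) _
      (hP.const_mem (by simp [le_max_iff]))

lemma maximal_total (hPmax : Maximal (· ∈ QMFam g h) P)
    (hN : InQM g ((N : MvPolynomial (Fin n) ℝ) - ∑ i, (X i)^2))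
    (a : MvPolynomial (Fin n) ℝ) : a ∈ P ∨ -a ∈ P := by
  have hP : QuadMod P := hPmax.1.1
  by_contra hcon
  push_neg at hcon
  obtain ⟨ha, hna⟩ := hcon
  -- both extensions are improper
  have key : ∀ b : MvPolynomial (Fin n) ℝ, b ∉ P →
      ∃ p ∈ P, ∃ s, IsSumSq s ∧ (-1 : MvPolynomial (Fin n) ℝ) = p + s * b := by
    intro b hb
    by_cases hm : (-1 : MvPolynomial (Fin n) ℝ) ∈ QMext P b
    · exact hm
    · exfalso
      have hmem : QMext P b ∈ QMFam g h :=
        ⟨quadMod_QMext hP b, subset_trans hPmax.1.2.1 (subset_QMext hP b), hm⟩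
      have := hPmax.2 hmem (subset_QMext hP b)
      exact hb (this (mem_QMext_self hP b))
  obtain ⟨p1, hp1, s1, hs1, hr1⟩ := key a ha
  obtain ⟨p2, hp2, s2, hs2, hr2⟩ := key (-a) hna
  obtain ⟨k, hk0, hka, hka'⟩ := P_ub_mem hPmax hN a
  have ha1 : s1 * (C k + a) ∈ P := hP.sumSq_mul_mem hs1 hka'
  have ha2 : s2 * (C k - a) ∈ P := hP.sumSq_mul_mem hs2 hka
  have ha3 : C k * (s2 * p1 + s1 * p2) ∈ P :=
    hP.smul_mem hk0 (hP.2.1 _ (hP.sumSq_mul_mem hs2 hp1) _ (hP.sumSq_mul_mem hs1 hp2))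
  have ha4 : p1 + p2 ∈ P := hP.2.1 _ hp1 _ hp2
  have htotal : s1 * (C k + a) + s2 * (C k - a) + C k * (s2 * p1 + s1 * p2) + (p1 + p2) ∈ P :=
    hP.2.1 _ (hP.2.1 _ (hP.2.1 _ ha1 _ ha2) _ ha3) _ ha4
  have hiden : s1 * (C k + a) + s2 * (C k - a) + C k * (s2 * p1 + s1 * p2) + (p1 + p2)
      = (-2 : MvPolynomial (Fin n) ℝ) := by
    linear_combination (-(1 + C k * s2)) * hr1 + (-(1 + C k * s1)) * hr2
  rw [hiden, show (-2 : MvPolynomial (Fin n) ℝ) = C (-2 : ℝ) by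
    rw [map_neg, map_ofNat]] at htotal
  exact hPmax.1.2.2 (hP.neg_one_of_neg_const (by norm_num) htotal)

end Total

section Alpha

variable {g : Fin m → MvPolynomial (Fin n) ℝ} {h : MvPolynomial (Fin n) ℝ}
  {P : Set (MvPolynomial (Fin n) ℝ)} {N : ℕ}

/-- The Kadison–Dubois functional associated to a proper quadratic module. -/
def qmAlpha (P : Set (MvPolynomial (Fin n) ℝ)) (a : MvPolynomial (Fin n) ℝ) : ℝ :=
  sInf {r : ℝ | C r - a ∈ P}

lemma alphaSet_upward (hPmax : Maximal (· ∈ QMFam g h) P) {a : MvPolynomial (Fin n) ℝ}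
    {r r' : ℝ} (hr : C r - a ∈ P) (hle : r ≤ r') : C r' - a ∈ P := by
  have hP : QuadMod P := hPmax.1.1
  have : (C r' : MvPolynomial (Fin n) ℝ) - a = (C r - a) + C (r' - r) := by
    rw [map_sub]; ring
  rw [this]
  exact hP.2.1 _ hr _ (hP.const_mem (by linarith))

lemma alphaSet_nonempty (hPmax : Maximal (· ∈ QMFam g h) P)
    (hN : InQM g ((N : MvPolynomial (Fin n) ℝ) - ∑ i, (X i)^2))
    (a : MvPolynomial (Fin n) ℝ) : {r : ℝ | C r - a ∈ P}.Nonempty := by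
  obtain ⟨c, hc⟩ := exists_ub hN a
  exact ⟨c, P_mem_of_inQM hPmax hc⟩

lemma const_nonneg_of_mem (hPmax : Maximal (· ∈ QMFam g h) P) {v : ℝ}
    (hv : (C v : MvPolynomial (Fin n) ℝ) ∈ P) : 0 ≤ v := by
  by_contra hneg
  exact hPmax.1.2.2 (hPmax.1.1.neg_one_of_neg_const (by linarith) hv)

lemma alphaSet_bddBelow (hPmax : Maximal (· ∈ QMFam g h) P)
    (hN : InQM g ((N : MvPolynomial (Fin n) ℝ) - ∑ i, (X i)^2))
    (a : MvPolynomial (Fin n) ℝ) : BddBelow {r : ℝ | C r - a ∈ P} := by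
  obtain ⟨c, hc⟩ := exists_lb hN a
  refine ⟨-c, fun r hr => ?_⟩
  have hmem : (C (r + c) : MvPolynomial (Fin n) ℝ) ∈ P := by
    have : (C (r + c) : MvPolynomial (Fin n) ℝ) = (C r - a) + (C c + a) := by
      rw [map_add]; ring
    rw [this]
    exact hPmax.1.1.2.1 _ hr _ (P_mem_of_inQM hPmax hc)
  have := const_nonneg_of_mem hPmax hmem
  linarith

lemma alpha_le (hPmax : Maximal (· ∈ QMFam g h) P)
    (hN : InQM g ((N : MvPolynomial (Fin n) ℝ) - ∑ i, (X i)^2))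
    {a : MvPolynomial (Fin n) ℝ} {r : ℝ} (hr : C r - a ∈ P) : qmAlpha P a ≤ r :=
  csInf_le (alphaSet_bddBelow hPmax hN a) hr

lemma alpha_mem_eps (hPmax : Maximal (· ∈ QMFam g h) P)
    (hN : InQM g ((N : MvPolynomial (Fin n) ℝ) - ∑ i, (X i)^2))
    (a : MvPolynomial (Fin n) ℝ) {ε : ℝ} (hε : 0 < ε) :
    C (qmAlpha P a + ε) - a ∈ P := by
  have hlt : sInf {r : ℝ | C r - a ∈ P} < qmAlpha P a + ε := by
    have : qmAlpha P a = sInf {r : ℝ | C r - a ∈ P} := rfl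
    linarith
  obtain ⟨r, hr, hrlt⟩ := (csInf_lt_iff (alphaSet_bddBelow hPmax hN a)
    (alphaSet_nonempty hPmax hN a)).1 hlt
  exact alphaSet_upward hPmax hr hrlt.le

lemma alpha_nonneg (hPmax : Maximal (· ∈ QMFam g h) P)
    (hN : InQM g ((N : MvPolynomial (Fin n) ℝ) - ∑ i, (X i)^2))
    {a : MvPolynomial (Fin n) ℝ} (ha : a ∈ P) : 0 ≤ qmAlpha P a := by
  refine le_csInf (alphaSet_nonempty hPmax hN a) (fun r hr => ?_)
  have : (C r : MvPolynomial (Fin n) ℝ) = (C r - a) + a := by ring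
  exact const_nonneg_of_mem hPmax (this ▸ hPmax.1.1.2.1 _ hr _ ha)

lemma alpha_C (hPmax : Maximal (· ∈ QMFam g h) P)
    (hN : InQM g ((N : MvPolynomial (Fin n) ℝ) - ∑ i, (X i)^2))
    (r : ℝ) : qmAlpha P (C r) = r := by
  refine le_antisymm (alpha_le hPmax hN (by simp [hPmax.1.1.zero_mem])) ?_
  refine le_csInf (alphaSet_nonempty hPmax hN _) (fun b hb => ?_)
  have hb' : (C (b - r) : MvPolynomial (Fin n) ℝ) ∈ P := by
    rw [map_sub]; exact hb
  linarith [const_nonneg_of_mem hPmax hb']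

lemma alpha_add_le (hPmax : Maximal (· ∈ QMFam g h) P)
    (hN : InQM g ((N : MvPolynomial (Fin n) ℝ) - ∑ i, (X i)^2))
    (a b : MvPolynomial (Fin n) ℝ) :
    qmAlpha P (a + b) ≤ qmAlpha P a + qmAlpha P b := by
  refine le_of_forall_pos_le_add (fun ε hε => ?_)
  have h1 := alpha_mem_eps hPmax hN a (half_pos hε)
  have h2 := alpha_mem_eps hPmax hN b (half_pos hε)
  have hsum : C (qmAlpha P a + qmAlpha P b + ε) - (a + b) ∈ P := by
    have : (C (qmAlpha P a + qmAlpha P b + ε) : MvPolynomial (Fin n) ℝ) - (a + b)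
        = (C (qmAlpha P a + ε/2) - a) + (C (qmAlpha P b + ε/2) - b) := by
      have e : (C (qmAlpha P a + qmAlpha P b + ε) : MvPolynomial (Fin n) ℝ)
          = C (qmAlpha P a + ε/2) + C (qmAlpha P b + ε/2) := by
        rw [← map_add]; congr 1; ring
      rw [e]; ring
    rw [this]
    exact hPmax.1.1.2.1 _ h1 _ h2
  exact alpha_le hPmax hN hsum

lemma alpha_add_neg_self (hPmax : Maximal (· ∈ QMFam g h) P)
    (hN : InQM g ((N : MvPolynomial (Fin n) ℝ) - ∑ i, (X i)^2))
    (a : MvPolynomial (Fin n) ℝ) : qmAlpha P a + qmAlpha P (-a) = 0 := by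
  refine le_antisymm ?_ ?_
  · -- uses totality
    have key : ∀ ε > (0:ℝ), qmAlpha P a + qmAlpha P (-a) ≤ ε := by
      intro ε hε
      have hnot : C (qmAlpha P a - ε) - a ∉ P := by
        intro hmem
        have := alpha_le hPmax hN hmem
        linarith
      have htot := maximal_total hPmax hN (C (qmAlpha P a - ε) - a)
      have hmem2 : C (-(qmAlpha P a - ε)) - (-a) ∈ P := by
        rcases htot with hmem | hmem
        · exact absurd hmem hnot
        · have : -(C (qmAlpha P a - ε) - a) = C (-(qmAlpha P a - ε)) - (-a) := by
            rw [map_neg]; ring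
          rwa [this] at hmem
      have := alpha_le hPmax hN hmem2
      linarith
    linarith [le_of_forall_pos_le_add (by simpa using key) (a := qmAlpha P a + qmAlpha P (-a)) (b := 0)]
  · by_contra hlt
    push_neg at hlt
    set ε : ℝ := -(qmAlpha P a + qmAlpha P (-a))/3 with hεdef
    have hε : 0 < ε := by rw [hεdef]; linarith
    have h1 := alpha_mem_eps hPmax hN a hε
    have h2 := alpha_mem_eps hPmax hN (-a) hε
    have hsum : (C (qmAlpha P a + qmAlpha P (-a) + 2*ε) : MvPolynomial (Fin n) ℝ) ∈ P := by
      have : (C (qmAlpha P a + qmAlpha P (-a) + 2*ε) : MvPolynomial (Fin n) ℝ)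
          = (C (qmAlpha P a + ε) - a) + (C (qmAlpha P (-a) + ε) - (-a)) := by
        have e : (C (qmAlpha P a + qmAlpha P (-a) + 2*ε) : MvPolynomial (Fin n) ℝ)
            = C (qmAlpha P a + ε) + C (qmAlpha P (-a) + ε) := by
          rw [← map_add]; congr 1; ring
        rw [e]; ring
      rw [this]
      exact hPmax.1.1.2.1 _ h1 _ h2
    have := const_nonneg_of_mem hPmax hsum
    rw [hεdef] at this
    linarith

lemma alpha_neg (hPmax : Maximal (· ∈ QMFam g h) P)
    (hN : InQM g ((N : MvPolynomial (Fin n) ℝ) - ∑ i, (X i)^2))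
    (a : MvPolynomial (Fin n) ℝ) : qmAlpha P (-a) = -qmAlpha P a := by
  linarith [alpha_add_neg_self hPmax hN a]

lemma alpha_add (hPmax : Maximal (· ∈ QMFam g h) P)
    (hN : InQM g ((N : MvPolynomial (Fin n) ℝ) - ∑ i, (X i)^2))
    (a b : MvPolynomial (Fin n) ℝ) :
    qmAlpha P (a + b) = qmAlpha P a + qmAlpha P b := by
  refine le_antisymm (alpha_add_le hPmax hN a b) ?_
  have h1 := alpha_add_le hPmax hN (-a) (-b)
  have h2 := alpha_neg hPmax hN a
  have h3 := alpha_neg hPmax hN b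
  have h4 : -a + -b = -(a+b) := by ring
  rw [h4, alpha_neg hPmax hN (a+b), h2, h3] at h1
  linarith

end Alpha

section Alpha2

variable {g : Fin m → MvPolynomial (Fin n) ℝ} {h : MvPolynomial (Fin n) ℝ}
  {P : Set (MvPolynomial (Fin n) ℝ)} {N : ℕ}

lemma alpha_smul_le (hPmax : Maximal (· ∈ QMFam g h) P)
    (hN : InQM g ((N : MvPolynomial (Fin n) ℝ) - ∑ i, (X i)^2))
    {c : ℝ} (hc : 0 < c) (a : MvPolynomial (Fin n) ℝ) :
    qmAlpha P (C c * a) ≤ c * qmAlpha P a := by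
  refine le_of_forall_pos_le_add (fun ε hε => ?_)
  have h1 := alpha_mem_eps hPmax hN a (div_pos hε hc)
  have h2 : C c * (C (qmAlpha P a + ε/c) - a) ∈ P :=
    hPmax.1.1.smul_mem hc.le h1
  have h3 : C c * (C (qmAlpha P a + ε/c) - a)
      = C (c * qmAlpha P a + ε) - C c * a := by
    rw [mul_sub, ← map_mul]
    have : c * (qmAlpha P a + ε/c) = c * qmAlpha P a + ε := by
      field_simp
    rw [this]
  rw [h3] at h2
  exact alpha_le hPmax hN h2

lemma alpha_smul_pos (hPmax : Maximal (· ∈ QMFam g h) P)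
    (hN : InQM g ((N : MvPolynomial (Fin n) ℝ) - ∑ i, (X i)^2))
    {c : ℝ} (hc : 0 < c) (a : MvPolynomial (Fin n) ℝ) :
    qmAlpha P (C c * a) = c * qmAlpha P a := by
  refine le_antisymm (alpha_smul_le hPmax hN hc a) ?_
  have h1 := alpha_smul_le hPmax hN (inv_pos.2 hc) (C c * a)
  have h2 : C c⁻¹ * (C c * a) = a := by
    rw [← mul_assoc, ← map_mul, inv_mul_cancel₀ (ne_of_gt hc), map_one, one_mul]
  rw [h2] at h1
  calc c * qmAlpha P a ≤ c * (c⁻¹ * qmAlpha P (C c * a)) := by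
        exact mul_le_mul_of_nonneg_left h1 hc.le
    _ = qmAlpha P (C c * a) := by field_simp

lemma alpha_smul (hPmax : Maximal (· ∈ QMFam g h) P)
    (hN : InQM g ((N : MvPolynomial (Fin n) ℝ) - ∑ i, (X i)^2))
    (c : ℝ) (a : MvPolynomial (Fin n) ℝ) :
    qmAlpha P (C c * a) = c * qmAlpha P a := by
  rcases lt_trichotomy c 0 with hc | hc | hc
  · have h1 := alpha_smul_pos hPmax hN (c := -c) (by linarith) a
    have h2 : C (-c) * a = -(C c * a) := by rw [map_neg]; ring
    rw [h2, alpha_neg hPmax hN] at h1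
    linarith
  · subst hc
    have : (C (0:ℝ) : MvPolynomial (Fin n) ℝ) * a = C 0 := by simp
    rw [this, alpha_C hPmax hN]
    ring
  · exact alpha_smul_pos hPmax hN hc a

lemma alpha_sub (hPmax : Maximal (· ∈ QMFam g h) P)
    (hN : InQM g ((N : MvPolynomial (Fin n) ℝ) - ∑ i, (X i)^2))
    (a b : MvPolynomial (Fin n) ℝ) :
    qmAlpha P (a - b) = qmAlpha P a - qmAlpha P b := by
  have : a - b = a + (-b) := by ring
  rw [this, alpha_add hPmax hN, alpha_neg hPmax hN]
  ring

lemma alpha_sq_mul (hPmax : Maximal (· ∈ QMFam g h) P)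
    (hN : InQM g ((N : MvPolynomial (Fin n) ℝ) - ∑ i, (X i)^2))
    (a b : MvPolynomial (Fin n) ℝ) :
    qmAlpha P (a^2 * b) = qmAlpha P (a^2) * qmAlpha P b := by
  have hP : QuadMod P := hPmax.1.1
  have hsqmem : a^2 ∈ P := by
    have := hP.2.2 a 1 hP.1
    simpa using this
  have hsq0 : 0 ≤ qmAlpha P (a^2) := alpha_nonneg hPmax hN hsqmem
  have hle : ∀ ε > (0:ℝ), qmAlpha P (a^2 * b) ≤ (qmAlpha P b + ε) * qmAlpha P (a^2) := by
    intro ε hε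
    have hu : a^2 * (C (qmAlpha P b + ε) - b) ∈ P :=
      hP.2.2 a _ (alpha_mem_eps hPmax hN b hε)
    have hiden : a^2 * b = C (qmAlpha P b + ε) * a^2 - a^2 * (C (qmAlpha P b + ε) - b) := by
      ring
    rw [hiden, alpha_sub hPmax hN, alpha_smul hPmax hN]
    have := alpha_nonneg hPmax hN hu
    linarith
  have hge : ∀ ε > (0:ℝ), (qmAlpha P b - ε) * qmAlpha P (a^2) ≤ qmAlpha P (a^2 * b) := by
    intro ε hε
    have hmem : b - C (qmAlpha P b - ε) ∈ P := by
      have h1 := alpha_mem_eps hPmax hN (-b) hε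
      have h2 : C (qmAlpha P (-b) + ε) - (-b) = b - C (qmAlpha P b - ε) := by
        rw [alpha_neg hPmax hN, show (C (-qmAlpha P b + ε) : MvPolynomial (Fin n) ℝ)
          = - C (qmAlpha P b - ε) by rw [← map_neg]; congr 1; ring]
        ring
      rwa [h2] at h1
    have hu : a^2 * (b - C (qmAlpha P b - ε)) ∈ P := hP.2.2 a _ hmem
    have hiden : a^2 * b = C (qmAlpha P b - ε) * a^2 + a^2 * (b - C (qmAlpha P b - ε)) := by
      ring
    rw [hiden, alpha_add hPmax hN, alpha_smul hPmax hN]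
    have := alpha_nonneg hPmax hN hu
    linarith
  have hle' : qmAlpha P (a^2 * b) ≤ qmAlpha P b * qmAlpha P (a^2) := by
    refine le_of_forall_pos_le_add (fun ε' hε' => ?_)
    have := hle (ε' / (qmAlpha P (a^2) + 1)) (by positivity)
    have hb : (ε' / (qmAlpha P (a^2) + 1)) * qmAlpha P (a^2) ≤ ε' := by
      rw [div_mul_eq_mul_div, div_le_iff₀ (by linarith)]
      nlinarith
    nlinarith
  have hge' : qmAlpha P b * qmAlpha P (a^2) ≤ qmAlpha P (a^2 * b) := by
    by_contra hcon
    push_neg at hcon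
    set ε' := qmAlpha P b * qmAlpha P (a^2) - qmAlpha P (a^2 * b) with hε'def
    have hε' : 0 < ε' := by linarith
    have := hge (ε' / (qmAlpha P (a^2) + 1)) (by positivity)
    have hb : (ε' / (qmAlpha P (a^2) + 1)) * qmAlpha P (a^2) < ε' := by
      rw [div_mul_eq_mul_div, div_lt_iff₀ (by linarith)]
      nlinarith
    nlinarith
  linarith [mul_comm (qmAlpha P b) (qmAlpha P (a^2))]

end Alpha2

section Alpha3

variable {g : Fin m → MvPolynomial (Fin n) ℝ} {h : MvPolynomial (Fin n) ℝ}
  {P : Set (MvPolynomial (Fin n) ℝ)} {N : ℕ}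

lemma alpha_sq_expand (hPmax : Maximal (· ∈ QMFam g h) P)
    (hN : InQM g ((N : MvPolynomial (Fin n) ℝ) - ∑ i, (X i)^2))
    (a : MvPolynomial (Fin n) ℝ) (t : ℝ) :
    qmAlpha P ((a - C t)^2) = qmAlpha P (a^2) - 2*t*qmAlpha P a + t^2 := by
  have hiden : (a - C t)^2 = a^2 + (C (-(2*t)) * a + C (t^2)) := by
    simp only [map_neg, map_mul, map_ofNat, map_pow]
    ring
  rw [hiden, alpha_add hPmax hN, alpha_add hPmax hN, alpha_smul hPmax hN,
    alpha_C hPmax hN]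
  ring

lemma alpha_sq (hPmax : Maximal (· ∈ QMFam g h) P)
    (hN : InQM g ((N : MvPolynomial (Fin n) ℝ) - ∑ i, (X i)^2))
    (a : MvPolynomial (Fin n) ℝ) : qmAlpha P (a^2) = (qmAlpha P a)^2 := by
  have hP : QuadMod P := hPmax.1.1
  set t := qmAlpha P a with ht
  have hsqmem : ∀ b : MvPolynomial (Fin n) ℝ, b^2 ∈ P := fun b => by
    have := hP.2.2 b 1 hP.1
    simpa using this
  have hge : t^2 ≤ qmAlpha P (a^2) := by
    have h0 : 0 ≤ qmAlpha P ((a - C t)^2) := alpha_nonneg hPmax hN (hsqmem _)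
    rw [alpha_sq_expand hPmax hN] at h0
    nlinarith
  set δ := qmAlpha P (a^2) - t^2 with hδ
  have hδ0 : 0 ≤ δ := by linarith
  rcases eq_or_lt_of_le hδ0 with heq | hlt
  · linarith
  · exfalso
    set c' := a - C t with hc'
    have hc'0 : qmAlpha P c' = 0 := by
      rw [hc', alpha_sub hPmax hN, alpha_C hPmax hN]; ring
    have hc'sq : qmAlpha P (c'^2) = δ := by
      rw [hc', alpha_sq_expand hPmax hN, hδ, ← ht]; ring
    set ε : ℝ := δ / (δ + 1) with hε
    have hεpos : 0 < ε := by positivity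
    have hEmem : (c' + 1)^2 * (C ε - c') ∈ P := by
      refine hP.2.2 _ _ ?_
      have := alpha_mem_eps hPmax hN c' hεpos
      rwa [hc'0, zero_add] at this
    have h0 : 0 ≤ qmAlpha P ((c' + 1)^2 * (C ε - c')) :=
      alpha_nonneg hPmax hN hEmem
    have hEiden : (c' + 1)^2 * (C ε - c')
        = C ε * c'^2 + (C (2*ε) * c' + (C ε * 1 + (C (-1) * (c'^2 * c')
          + (C (-2) * c'^2 + C (-1) * c')))) := by
      simp only [map_mul, map_neg, map_one, map_ofNat]
      ring
    rw [hEiden] at h0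
    have hsmul2ε : (C (2*ε) : MvPolynomial (Fin n) ℝ) * c' = C (2*ε) * c' := rfl
    simp only [alpha_add hPmax hN, alpha_smul hPmax hN] at h0
    rw [alpha_sq_mul hPmax hN, hc'0, hc'sq] at h0
    have h1 : qmAlpha P (1 : MvPolynomial (Fin n) ℝ) = 1 := by
      rw [← C_1, alpha_C hPmax hN]
    rw [h1] at h0
    -- h0 : 0 ≤ ε*δ + (2ε*0 + (ε*1 + (-1*(δ*0) + (-2*δ + -1*0))))
    have : ε * (δ + 1) = δ := by
      rw [hε]; field_simp
    nlinarith
  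
lemma alpha_mul (hPmax : Maximal (· ∈ QMFam g h) P)
    (hN : InQM g ((N : MvPolynomial (Fin n) ℝ) - ∑ i, (X i)^2))
    (a b : MvPolynomial (Fin n) ℝ) :
    qmAlpha P (a * b) = qmAlpha P a * qmAlpha P b := by
  have h4 : (C (4:ℝ) : MvPolynomial (Fin n) ℝ) * (a*b) = (a+b)^2 - (a-b)^2 := by
    rw [map_ofNat]; ring
  have h5 := alpha_smul hPmax hN 4 (a*b)
  rw [h4, alpha_sub hPmax hN, alpha_sq hPmax hN, alpha_sq hPmax hN,
    alpha_add hPmax hN, alpha_sub hPmax hN] at h5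
  nlinarith [h5]

lemma alpha_eval (hPmax : Maximal (· ∈ QMFam g h) P)
    (hN : InQM g ((N : MvPolynomial (Fin n) ℝ) - ∑ i, (X i)^2))
    (p : MvPolynomial (Fin n) ℝ) :
    qmAlpha P p = eval (fun i => qmAlpha P (X i)) p := by
  induction p using MvPolynomial.induction_on with
  | C r => rw [alpha_C hPmax hN, eval_C]
  | add p q hp hq => rw [alpha_add hPmax hN, map_add, hp, hq]
  | mul_X p i hp => rw [alpha_mul hPmax hN, map_mul, hp, eval_X]

end Alpha3

/-- Putinar's Positivstellensatz. -/
theorem putinar {g : Fin m → MvPolynomial (Fin n) ℝ} {N : ℕ}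
    (hN : InQM g ((N : MvPolynomial (Fin n) ℝ) - ∑ i, (X i)^2))
    {h : MvPolynomial (Fin n) ℝ}
    (hpos : ∀ x : Fin n → ℝ, (∀ j, 0 ≤ eval x (g j)) → 0 < eval x h) :
    InQM g h := by
  by_cases hm1 : (-1 : MvPolynomial (Fin n) ℝ) ∈ M2 g h
  · obtain ⟨p, hp, s, hs, heq⟩ := hm1
    exact lemmaD hN hs hp (by linear_combination heq)
  · exfalso
    obtain ⟨P, hsub, hPmax⟩ := exists_maximal hm1
    set x : Fin n → ℝ := fun i => qmAlpha P (X i) with hx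
    have hxS : ∀ j, 0 ≤ eval x (g j) := fun j => by
      rw [← alpha_eval hPmax hN]
      exact alpha_nonneg hPmax hN (P_mem_of_inQM hPmax (inQM_g j))
    have hmem : -h ∈ P := hsub neg_h_mem_M2
    have hh := alpha_nonneg hPmax hN hmem
    rw [alpha_neg hPmax hN, alpha_eval hPmax hN] at hh
    exact absurd (hpos x hxS) (not_lt.2 (by linarith))

end Stmt18

open Stmt18 in
theorem stmt_18 {n m : ℕ} (hn : 1 ≤ n) (d : ℕ)
    (f : MvPolynomial (Fin n) ℝ) (g : Fin m → MvPolynomial (Fin n) ℝ)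
    (hfint : ∀ σ, ∃ z : ℤ, f.coeff σ = (z : ℝ))
    (hgint : ∀ j, ∀ σ, ∃ z : ℤ, (g j).coeff σ = (z : ℝ))
    (hfdeg : f.totalDegree ≤ d) (hgdeg : ∀ j, (g j).totalDegree ≤ d)
    (S : Set (Fin n → ℝ)) (hS : S = {x | ∀ j, 0 ≤ eval x (g j)})
    (hSne : S.Nonempty) (hScpt : IsCompact S)
    (hScube : S ⊆ Set.Icc (-1 : Fin n → ℝ) 1)
    (hSint : (interior S).Nonempty)
    (harch : ∃ N : ℕ, InQM g ((N : MvPolynomial (Fin n) ℝ) - ∑ i, (X i) ^ 2))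
    (hfpos : ∀ x ∈ S, 0 < eval x f)
    (fstar : ℝ) (hfstar : fstar = sInf ((fun x => eval x f) '' S)) (hfstarpos : 0 < fstar) :
    ∃ D0 : ℕ, ∀ D : ℕ, D0 ≤ D → Even D →
      0 < sSup {b : ℝ | InQMT D g (f - C b)} ∧
      sSup {b : ℝ | InQMT D g (f - C b)} ≤ fstar := by
  classical
  obtain ⟨N, hN⟩ := harch
  -- fstar is a lower bound for f on S
  have hcont : Continuous fun x : Fin n → ℝ => eval x f := MvPolynomial.continuous_eval f
  have hlow : ∀ x ∈ S, fstar ≤ eval x f := by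
    intro x hx
    rw [hfstar]
    exact csInf_le (hScpt.image hcont).bddBelow ⟨x, hx, rfl⟩
  -- Putinar applied to f - fstar/2
  set b : ℝ := fstar / 2 with hb
  have hbpos : 0 < b := by rw [hb]; linarith
  have hmem : InQM g (f - C b) := by
    refine putinar hN (fun x hx => ?_)
    have hxS : x ∈ S := by rw [hS]; exact hx
    have := hlow x hxS
    rw [map_sub, eval_C]
    rw [hb]; linarith
  obtain ⟨σ0, σ, hσ0, hσ, hfeq⟩ := hmem
  refine ⟨max σ0.totalDegree (Finset.univ.sup fun j => (σ j * g j).totalDegree),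
    fun D hD _hDe => ?_⟩
  -- b is in the truncated module at level D
  have hbmem : b ∈ {b' : ℝ | InQMT D g (f - C b')} := by
    refine ⟨σ0, σ, hσ0, ?_, fun j => ⟨hσ j, ?_⟩, hfeq⟩
    · exact le_trans (le_trans (le_max_left _ _) hD) le_rfl
    · have h1 : (σ j * g j).totalDegree
          ≤ Finset.univ.sup (fun j => (σ j * g j).totalDegree) :=
        Finset.le_sup (f := fun j => (σ j * g j).totalDegree) (Finset.mem_univ j)
      exact le_trans (le_trans h1 (le_max_right _ _)) hD
  -- every element of the truncated module is at most fstar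
  have hub : ∀ b' ∈ {b' : ℝ | InQMT D g (f - C b')}, b' ≤ fstar := by
    intro b' hb'
    obtain ⟨τ0, τ, hτ0, _, hτ, heq⟩ := hb'
    have hQM : InQM g (f - C b') := ⟨τ0, τ, hτ0, fun j => (hτ j).1, heq⟩
    have hlb : ∀ x ∈ S, b' ≤ eval x f := by
      intro x hx
      have hx' : ∀ j, 0 ≤ eval x (g j) := by rw [hS] at hx; exact hx
      have := inQM_eval_nonneg hQM hx'
      rw [map_sub, eval_C] at this
      linarith
    rw [hfstar]
    exact le_csInf (hSne.image _) (by rintro _ ⟨x, hx, rfl⟩; exact hlb x hx)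
  have hbdd : BddAbove {b' : ℝ | InQMT D g (f - C b')} := ⟨fstar, hub⟩
  constructor
  · exact lt_of_lt_of_le hbpos (le_csSup hbdd hbmem)
  · exact Real.sSup_le hub hfstarpos.le
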